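/- Let N be uniformly distributed on [−ϑ, ϑ] with ϑ ∈ (0,∞), let G(x) = x, and let β ≥ ϑ. Then for every random variable X defined on the same probability space as N with X ≥ 0 almost surely, E X ≤ β, and such that X+N has a law absolutely continuous with respect to Lebesgue measure with well-defined differential entropy, one has h(X+N) ≤ ln(e·(β+ϑ)), and equality is attained by the (fully dependent) input X† = g(N), where g(n) = −n − ϑ − (β+ϑ)·ln((ϑ−n)/(2ϑ)) for n ∈ (−ϑ,ϑ); for this input Y† = X†+N has density p_{Y†}(y) = (β+ϑ)^{-1} e^{−(y+ϑ)/(β+ϑ)} for y ≥ −ϑ (i.e. Y† is a shifted exponential with mean β and shift −ϑ), X† ≥ 0, E X† = β, and h(Y†) = ln(e·(β+ϑ)). In particular sup{h(Y): Y ∈ Σ(N;G,β,[0,∞))} = ln(e·(β+ϑ)). -/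

import Mathlib

open MeasureTheory Real Filter Set
open scoped ENNReal Topology ProbabilityTheory

noncomputable section

variable {Ω : Type*} [MeasureSpace Ω]

/-- `Z` has a law absolutely continuous w.r.t. Lebesgue measure, with density `p`. -/
def HasDens (Z : Ω → ℝ) (p : ℝ → ℝ) : Prop :=
  Measurable Z ∧ Measurable p ∧ (∀ x, 0 ≤ p x) ∧
    Measure.map Z (ℙ : Measure Ω) = volume.withDensity (fun x => ENNReal.ofReal (p x))

/-- Differential entropy of a density: `h = -∫ p ln p`. -/
def dEnt (p : ℝ → ℝ) : ℝ := -∫ y, p y * Real.log (p y)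

/-- The differential entropy of the density `p` is well defined: `∫ p |ln p| < ∞`. -/
def EntWellDef (p : ℝ → ℝ) : Prop := Integrable (fun y => p y * Real.log (p y))

/-- The real points of the open interval `(a,b)` with extended-real endpoints. -/
def eIoo (a b : EReal) : Set ℝ := {x : ℝ | a < (x : EReal) ∧ (x : EReal) < b}

/-- The noise class `𝔑(a,b)`: `N` takes values in the closure of `(a,b)`, is integrable,
has a Lebesgue density `pN` which is `C¹` and strictly positive on `(a,b)` and vanishes
outside, and has well-defined differential entropy. -/
structure IsNoise (a b : EReal) (N : Ω → ℝ) (pN : ℝ → ℝ) : Prop where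
  prob : IsProbabilityMeasure (ℙ : Measure Ω)
  lt : a < b
  mem : ∀ᵐ ω ∂(ℙ : Measure Ω), a ≤ (N ω : EReal) ∧ (N ω : EReal) ≤ b
  int : Integrable N (ℙ : Measure Ω)
  dens : HasDens N pN
  smooth : ContDiffOn ℝ 1 pN (eIoo a b)
  pos : ∀ x ∈ eIoo a b, 0 < pN x
  zero : ∀ x ∉ eIoo a b, pN x = 0
  went : EntWellDef pN

/-- Cost function: `C¹`, convex, with derivative a.e. nonzero. -/
structure IsCost (G : ℝ → ℝ) : Prop where
  smooth : ContDiff ℝ 1 G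
  convex : ConvexOn ℝ Set.univ G
  dne : ∀ᵐ x ∂(volume : Measure ℝ), deriv G x ≠ 0

/-- `β ∈ I_G = (inf G, ∞)`, i.e. `β` is strictly above the infimum of `G`. -/
def InIG (G : ℝ → ℝ) (β : ℝ) : Prop := ∃ x, G x < β

/-- Admissible input: integrable, with integrable cost and average cost at most `β`. -/
def Admissible (G : ℝ → ℝ) (β : ℝ) (X : Ω → ℝ) : Prop :=
  Measurable X ∧ Integrable X (ℙ : Measure Ω) ∧
    Integrable (fun ω => G (X ω)) (ℙ : Measure Ω) ∧
    (∫ ω, G (X ω) ∂(ℙ : Measure Ω)) ≤ β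

/-- The set of achievable output entropies `{h(Y) : Y ∈ Σ(N;G,β)}` (joint couplings). -/
def SigmaEnt (N : Ω → ℝ) (G : ℝ → ℝ) (β : ℝ) : Set ℝ :=
  {h | ∃ (X : Ω → ℝ) (pY : ℝ → ℝ), Admissible G β X ∧
        HasDens (fun ω => X ω + N ω) pY ∧ EntWellDef pY ∧ h = dEnt pY}

/-- The set of achievable output entropies `{h(Y) : Y ∈ Σ_⊥(N;G,β)}` (independent input). -/
def SigmaEntIndep (N : Ω → ℝ) (G : ℝ → ℝ) (β : ℝ) : Set ℝ :=
  {h | ∃ (X : Ω → ℝ) (pY : ℝ → ℝ), Admissible G β X ∧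
        ProbabilityTheory.IndepFun X N (ℙ : Measure Ω) ∧
        HasDens (fun ω => X ω + N ω) pY ∧ EntWellDef pY ∧ h = dEnt pY}

/-- Achievable output entropies with an additional amplitude constraint `X ∈ s` a.s. -/
def SigmaEntAmp (N : Ω → ℝ) (G : ℝ → ℝ) (β : ℝ) (s : Set ℝ) : Set ℝ :=
  {h | ∃ (X : Ω → ℝ) (pY : ℝ → ℝ), Admissible G β X ∧
        (∀ᵐ ω ∂(ℙ : Measure Ω), X ω ∈ s) ∧
        HasDens (fun ω => X ω + N ω) pY ∧ EntWellDef pY ∧ h = dEnt pY}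

/-- The filter of real numbers approaching the extended-real endpoint `a` from the right. -/
def rightNhds (a : EReal) : Filter ℝ :=
  Filter.comap (fun x : ℝ => (x : EReal)) (nhdsWithin a (Set.Ioi a))

/-- The filter of real numbers approaching the extended-real endpoint `b` from the left. -/
def leftNhds (b : EReal) : Filter ℝ :=
  Filter.comap (fun x : ℝ => (x : EReal)) (nhdsWithin b (Set.Iio b))

/-- The hypotheses of Theorem 1: constants `C, λ > 0`, a `C¹` curve `g` with derivative `g'`
and a primitive `Φ` of `G' ∘ g`, satisfying the first integral of the Euler–Lagrange
equation, the natural boundary conditions, the isoperimetric constraint `E G(g(N)) = β`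
and `E|g(N)| < ∞`. -/
structure FirstIntegral (a b : EReal) (N : Ω → ℝ) (pN G : ℝ → ℝ) (β : ℝ)
    (C lam : ℝ) (g g' Φ : ℝ → ℝ) : Prop where
  hC : 0 < C
  hlam : 0 < lam
  hgmeas : Measurable g
  hg : ∀ n ∈ eIoo a b, HasDerivAt g (g' n) n
  hg' : ContinuousOn g' (eIoo a b)
  hΦ : ∀ n ∈ eIoo a b, HasDerivAt Φ (deriv G (g n)) n
  heq : ∀ n ∈ eIoo a b, pN n = C * (1 + g' n) * Real.exp (-(lam * (Φ n + G (g n))))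
  hbl : Filter.Tendsto (fun n => pN n / (1 + g' n))
    (rightNhds a ⊓ Filter.principal (eIoo a b)) (nhds 0)
  hbr : Filter.Tendsto (fun n => pN n / (1 + g' n))
    (leftNhds b ⊓ Filter.principal (eIoo a b)) (nhds 0)
  hGint : Integrable (fun ω => G (g (N ω))) (ℙ : Measure Ω)
  hcost : (∫ ω, G (g (N ω)) ∂(ℙ : Measure Ω)) = β
  hgint : Integrable (fun ω => g (N ω)) (ℙ : Measure Ω)

/-- Fourier transform of a finite Borel measure on `ℝ`: `F[μ](f) = ∫ e^{-2πifξ} dμ(ξ)`. -/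
def charF (μ : Measure ℝ) (f : ℝ) : ℂ :=
  ∫ ξ, Complex.exp (Complex.ofReal (-(2 * Real.pi * f * ξ)) * Complex.I) ∂μ

/-- Positive definiteness of a complex-valued function on `ℝ`: every Hermitian sum
`∑_{l,m} φ(f_l - f_m) z_l z̄_m` is a nonnegative real number. -/
def PosDefFn (φ : ℝ → ℂ) : Prop :=
  ∀ (n : ℕ) (f : Fin n → ℝ) (z : Fin n → ℂ),
    0 ≤ (∑ l, ∑ m, φ (f l - f m) * z l * (starRingEnd ℂ) (z m)).re ∧
    (∑ l, ∑ m, φ (f l - f m) * z l * (starRingEnd ℂ) (z m)).im = 0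


section DensAux
variable {Ω : Type*} [MeasureSpace Ω]
lemma HasDens.integral_comp {Z : Ω → ℝ} {p : ℝ → ℝ} (h : HasDens Z p) {f : ℝ → ℝ}
    (hf : Measurable f) : ∫ ω, f (Z ω) ∂(ℙ : Measure Ω) = ∫ y, f y * p y := by
  obtain ⟨hZ, hp, hp0, hlaw⟩ := h
  rw [← integral_map hZ.aemeasurable hf.aestronglyMeasurable, hlaw]
  have he : (fun x => ENNReal.ofReal (p x)) = (fun x => ((p x).toNNReal : ℝ≥0∞)) := rfl
  rw [he, integral_withDensity_eq_integral_smul (by fun_prop) f]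
  congr 1; ext y
  rw [NNReal.smul_def, smul_eq_mul, Real.coe_toNNReal _ (hp0 y)]; ring

lemma HasDens.integrable_comp {Z : Ω → ℝ} {p : ℝ → ℝ} (h : HasDens Z p) {f : ℝ → ℝ}
    (hf : Measurable f) :
    Integrable (fun ω => f (Z ω)) (ℙ : Measure Ω) ↔ Integrable (fun y => f y * p y) := by
  obtain ⟨hZ, hp, hp0, hlaw⟩ := h
  rw [show (fun ω => f (Z ω)) = f ∘ Z from rfl,
    ← integrable_map_measure hf.aestronglyMeasurable hZ.aemeasurable, hlaw,
    integrable_withDensity_iff (by fun_prop) (by simp [ENNReal.ofReal_lt_top])]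
  constructor <;> intro hh <;> refine hh.congr (Filter.Eventually.of_forall fun y => ?_) <;>
    simp [ENNReal.toReal_ofReal (hp0 y)]

lemma HasDens.apply {Z : Ω → ℝ} {p : ℝ → ℝ} (h : HasDens Z p) {s : Set ℝ}
    (hs : MeasurableSet s) :
    (ℙ : Measure Ω) (Z ⁻¹' s) = ∫⁻ y in s, ENNReal.ofReal (p y) := by
  obtain ⟨hZ, hp, hp0, hlaw⟩ := h
  rw [← Measure.map_apply hZ hs, hlaw, withDensity_apply _ hs]

end DensAux






variable {ϑ m : ℝ}

lemma expDeriv (hm : 0 < m) (y : ℝ) :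
    HasDerivAt (fun y => -Real.exp (-((y + ϑ) / m))) (m⁻¹ * Real.exp (-((y + ϑ) / m))) y := by
  have h1 : HasDerivAt (fun y : ℝ => -((y + ϑ) / m)) (-m⁻¹) y := by
    simpa [one_div] using (((hasDerivAt_id y).add_const ϑ).div_const m).fun_neg
  have := (h1.exp).fun_neg
  refine this.congr_deriv ?_
  ring

lemma expTendsto (hm : 0 < m) :
    Tendsto (fun y : ℝ => -Real.exp (-((y + ϑ) / m))) atTop (𝓝 0) := by
  have h1 : Tendsto (fun y : ℝ => (y + ϑ) / m) atTop atTop :=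
    (tendsto_atTop_add_const_right _ ϑ tendsto_id).atTop_div_const hm
  have := (Real.tendsto_exp_neg_atTop_nhds_zero.comp h1).neg
  simpa using this

lemma E0int (hm : 0 < m) :
    IntegrableOn (fun y => m⁻¹ * Real.exp (-((y + ϑ) / m))) (Ioi (-ϑ)) :=
  integrableOn_Ioi_deriv_of_nonneg' (fun x _ => expDeriv hm x)
    (fun x _ => by positivity) (expTendsto hm)

lemma E0val (hm : 0 < m) :
    ∫ y in Ioi (-ϑ), m⁻¹ * Real.exp (-((y + ϑ) / m)) = 1 := by
  rw [integral_Ioi_of_hasDerivAt_of_nonneg' (fun x _ => expDeriv hm x)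
    (fun x _ => by positivity) (expTendsto hm)]
  simp

lemma E1deriv (hm : 0 < m) (y : ℝ) :
    HasDerivAt (fun y => -((y + ϑ + m) * Real.exp (-((y + ϑ) / m))))
      ((y + ϑ) * (m⁻¹ * Real.exp (-((y + ϑ) / m)))) y := by
  have h1 : HasDerivAt (fun y : ℝ => -((y + ϑ) / m)) (-m⁻¹) y := by
    simpa [one_div] using (((hasDerivAt_id y).add_const ϑ).div_const m).fun_neg
  have h2 : HasDerivAt (fun y : ℝ => y + ϑ + m) 1 y := by
    simpa using ((hasDerivAt_id y).add_const ϑ).add_const m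
  have := (h2.fun_mul h1.exp).fun_neg
  refine this.congr_deriv ?_
  field_simp
  ring

lemma E1tendsto (hm : 0 < m) :
    Tendsto (fun y : ℝ => -((y + ϑ + m) * Real.exp (-((y + ϑ) / m)))) atTop (𝓝 0) := by
  have h1 : Tendsto (fun y : ℝ => (y + ϑ) / m) atTop atTop :=
    (tendsto_atTop_add_const_right _ ϑ tendsto_id).atTop_div_const hm
  have h2 : Tendsto (fun x : ℝ => -((m * x + m) * Real.exp (-x))) atTop (𝓝 0) := by
    have := ((Real.tendsto_pow_mul_exp_neg_atTop_nhds_zero 1).const_mul m).add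
      (Real.tendsto_exp_neg_atTop_nhds_zero.const_mul m)
    have h3 : Tendsto (fun x : ℝ => m * (x ^ 1 * Real.exp (-x)) + m * Real.exp (-x)) atTop (𝓝 0) := by
      simpa using this
    have := h3.neg
    simp only [neg_zero] at this ⊢
    refine this.congr fun x => ?_
    ring
  have := h2.comp h1
  refine this.congr fun y => ?_
  simp only [Function.comp_apply]
  have : m * ((y + ϑ) / m) = y + ϑ := by field_simp
  rw [this]

lemma E1int (hm : 0 < m) :
    IntegrableOn (fun y => (y + ϑ) * (m⁻¹ * Real.exp (-((y + ϑ) / m)))) (Ioi (-ϑ)) :=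
  integrableOn_Ioi_deriv_of_nonneg' (fun x _ => E1deriv hm x)
    (fun x hx => mul_nonneg (by linarith [hx.out.le]) (by positivity)) (E1tendsto hm)

lemma E1val (hm : 0 < m) :
    ∫ y in Ioi (-ϑ), (y + ϑ) * (m⁻¹ * Real.exp (-((y + ϑ) / m))) = m := by
  rw [integral_Ioi_of_hasDerivAt_of_nonneg' (fun x _ => E1deriv hm x)
    (fun x hx => mul_nonneg (by linarith [hx.out.le]) (by positivity)) (E1tendsto hm)]
  norm_num







variable {ϑ : ℝ}

/-- Antiderivative of `n ↦ log ((ϑ - n)/(2ϑ))`. -/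
def FF (ϑ : ℝ) (n : ℝ) : ℝ := -(2 * ϑ) * (((ϑ - n) / (2 * ϑ)) * Real.log ((ϑ - n) / (2 * ϑ))) - n

lemma FFcont (ϑ : ℝ) : Continuous (FF ϑ) := by
  unfold FF
  have h1 : Continuous fun n : ℝ => ((ϑ - n) / (2 * ϑ)) * Real.log ((ϑ - n) / (2 * ϑ)) :=
    Real.continuous_mul_log.comp (by continuity)
  exact ((continuous_const.mul h1).sub continuous_id)

lemma FFderiv (hϑ : 0 < ϑ) {n : ℝ} (hn : n ∈ Ioo (-ϑ) ϑ) :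
    HasDerivAt (FF ϑ) (Real.log ((ϑ - n) / (2 * ϑ))) n := by
  have hne : (2 : ℝ) * ϑ ≠ 0 := by positivity
  have hupos : 0 < (ϑ - n) / (2 * ϑ) := by
    apply div_pos (by linarith [hn.2]) (by positivity)
  have hu : HasDerivAt (fun n : ℝ => (ϑ - n) / (2 * ϑ)) (-(2 * ϑ)⁻¹) n := by
    simpa [neg_div, one_div] using ((hasDerivAt_const n ϑ).sub (hasDerivAt_id n)).div_const (2 * ϑ)
  have hml := (Real.hasDerivAt_mul_log (ne_of_gt hupos)).comp n hu
  have := ((hml.const_mul (-(2 * ϑ))).fun_sub (hasDerivAt_id n))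
  refine this.congr_deriv ?_
  field_simp
  ring

lemma logIntOn (hϑ : 0 < ϑ) :
    IntegrableOn (fun n => Real.log ((ϑ - n) / (2 * ϑ))) (Ioc (-ϑ) ϑ) := by
  have h := intervalIntegral.integrableOn_deriv_of_nonneg (g := fun n => -(FF ϑ n))
    (g' := fun n => -Real.log ((ϑ - n) / (2 * ϑ)))
    ((FFcont ϑ).neg.continuousOn)
    (fun x hx => (FFderiv hϑ hx).neg)
    (fun x hx => by
      rw [neg_nonneg]
      apply Real.log_nonpos
      · exact div_nonneg (by linarith [hx.2]) (by positivity)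
      · rw [div_le_one (by positivity)]; linarith [hx.1])
  have h2 := h.neg
  refine h2.congr (Filter.Eventually.of_forall fun x => ?_)
  simp

lemma logVal (hϑ : 0 < ϑ) :
    ∫ n in Ioc (-ϑ) ϑ, Real.log ((ϑ - n) / (2 * ϑ)) = -(2 * ϑ) := by
  have hle : (-ϑ) ≤ ϑ := by linarith
  have h := intervalIntegral.integral_eq_sub_of_hasDeriv_right_of_le hle
    ((FFcont ϑ).continuousOn)
    (fun x hx => (FFderiv hϑ hx).hasDerivWithinAt)
    ((intervalIntegrable_iff_integrableOn_Ioc_of_le hle).mpr (logIntOn hϑ))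
  rw [intervalIntegral.integral_of_le hle] at h
  have h2 : (ϑ - -ϑ) / (2 * ϑ) = 1 := by field_simp; ring
  have FA : FF ϑ ϑ = -ϑ := by simp [FF]
  have FB : FF ϑ (-ϑ) = ϑ := by rw [FF, h2]; simp
  rw [h, FA, FB]
  ring

section Noise
variable {Ω : Type*} [MeasureSpace Ω] [IsProbabilityMeasure (ℙ : Measure Ω)]
variable {N : Ω → ℝ} {ϑ β : ℝ}

lemma uIndicator (ϑ : ℝ) (f : ℝ → ℝ) :
    (fun n => f n * (if n ∈ Set.Icc (-ϑ) ϑ then (2 * ϑ)⁻¹ else 0)) =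
      (Set.Icc (-ϑ) ϑ).indicator (fun n => f n * (2 * ϑ)⁻¹) := by
  ext n; by_cases h : n ∈ Set.Icc (-ϑ) ϑ <;> simp [Set.indicator, h]

lemma N_mem (hN : HasDens N (fun n => if n ∈ Set.Icc (-ϑ) ϑ then (2 * ϑ)⁻¹ else 0)) :
    ∀ᵐ ω ∂(ℙ : Measure Ω), N ω ∈ Set.Ico (-ϑ) ϑ := by
  have h0 : (ℙ : Measure Ω) (N ⁻¹' (Set.Ico (-ϑ) ϑ)ᶜ) = 0 := by
    rw [hN.apply measurableSet_Ico.compl]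
    have hae : ∀ᵐ (y : ℝ) ∂volume, y ∈ (Set.Ico (-ϑ) ϑ)ᶜ →
        ENNReal.ofReal (if y ∈ Set.Icc (-ϑ) ϑ then (2 * ϑ)⁻¹ else 0) = 0 := by
      have hsing : ({ϑ} : Set ℝ)ᶜ ∈ ae volume := by
        rw [mem_ae_iff, compl_compl]; exact volume_singleton
      filter_upwards [hsing] with y hy hmem
      have : y ∉ Set.Icc (-ϑ) ϑ := by
        intro hIcc
        rcases lt_or_eq_of_le hIcc.2 with h | h
        · exact hmem ⟨hIcc.1, h⟩
        · exact hy h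
      simp [this]
    rw [setLIntegral_congr_fun_ae measurableSet_Ico.compl hae]
    simp
  rw [ae_iff]
  have hset : {ω | ¬ N ω ∈ Set.Ico (-ϑ) ϑ} = N ⁻¹' (Set.Ico (-ϑ) ϑ)ᶜ := by
    ext ω; simp
  rw [hset]; exact h0

lemma N_integrable (hNm : Measurable N)
    (hmem : ∀ᵐ ω ∂(ℙ : Measure Ω), N ω ∈ Set.Ico (-ϑ) ϑ) :
    Integrable N (ℙ : Measure Ω) := by
  refine Integrable.mono' (integrable_const ϑ) hNm.aestronglyMeasurable ?_
  filter_upwards [hmem] with ω h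
  rw [Real.norm_eq_abs, abs_le]
  exact ⟨h.1, h.2.le⟩

lemma intIcc (hϑ : 0 < ϑ) (f : ℝ → ℝ) :
    ∫ n in Set.Icc (-ϑ) ϑ, f n = ∫ n in (-ϑ)..ϑ, f n := by
  rw [intervalIntegral.integral_of_le (by linarith), integral_Icc_eq_integral_Ioc]

lemma N_integral_zero (hϑ : 0 < ϑ)
    (hN : HasDens N (fun n => if n ∈ Set.Icc (-ϑ) ϑ then (2 * ϑ)⁻¹ else 0)) :
    ∫ ω, N ω ∂(ℙ : Measure Ω) = 0 := by
  have := hN.integral_comp (f := fun y => y) measurable_id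
  rw [show (fun ω => (fun y : ℝ => y) (N ω)) = N from rfl] at this
  rw [this, uIndicator, MeasureTheory.integral_indicator measurableSet_Icc, intIcc hϑ]
  rw [intervalIntegral.integral_mul_const, integral_id]
  ring

/-- The optimal input as a function of the noise. -/
def gg (ϑ β : ℝ) (n : ℝ) : ℝ := -n - ϑ - (β + ϑ) * Real.log ((ϑ - n) / (2 * ϑ))

lemma gg_meas (ϑ β : ℝ) : Measurable (gg ϑ β) := by
  unfold gg
  refine (measurable_id.neg.sub_const ϑ).sub (measurable_const.mul ?_)
  exact Real.measurable_log.comp ((measurable_const.sub measurable_id).div_const _)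

lemma gg_nonneg (hϑ : 0 < ϑ) (hβ : ϑ ≤ β) {n : ℝ} (hn : n ∈ Set.Ico (-ϑ) ϑ) :
    0 ≤ gg ϑ β n := by
  unfold gg
  set t := (ϑ - n) / (2 * ϑ) with ht
  have ht0 : 0 < t := div_pos (by linarith [hn.2]) (by positivity)
  have ht1 : t ≤ 1 := by rw [ht, div_le_one (by positivity)]; linarith [hn.1]
  have h2 : 2 * ϑ * t = ϑ - n := by rw [ht]; field_simp
  have hlog : Real.log t ≤ t - 1 := Real.log_le_sub_one_of_pos ht0
  have h3 : (β + ϑ) * Real.log t ≤ (2 * ϑ) * Real.log t :=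
    mul_le_mul_of_nonpos_right (by linarith) (Real.log_nonpos ht0.le ht1)
  have h4 : (2 * ϑ) * Real.log t ≤ 2 * ϑ * (t - 1) := by
    have := mul_le_mul_of_nonneg_left hlog (by positivity : (0:ℝ) ≤ 2 * ϑ)
    linarith
  linarith

lemma gg_intOn (hϑ : 0 < ϑ) : IntegrableOn (gg ϑ β) (Set.Icc (-ϑ) ϑ) := by
  unfold gg
  refine Integrable.sub ?_ ?_
  · exact (Continuous.integrableOn_Icc (by continuity))
  · exact (integrableOn_Icc_iff_integrableOn_Ioc).mpr ((logIntOn hϑ).const_mul _)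

lemma gg_setIntegral (hϑ : 0 < ϑ) :
    ∫ n in Set.Icc (-ϑ) ϑ, gg ϑ β n = 2 * ϑ * β := by
  unfold gg
  have h1 : IntegrableOn (fun n : ℝ => -n - ϑ) (Set.Icc (-ϑ) ϑ) :=
    Continuous.integrableOn_Icc (by continuity)
  have h2 : IntegrableOn (fun n : ℝ => (β + ϑ) * Real.log ((ϑ - n) / (2 * ϑ)))
      (Set.Icc (-ϑ) ϑ) :=
    (integrableOn_Icc_iff_integrableOn_Ioc).mpr ((logIntOn hϑ).const_mul _)
  rw [integral_sub h1 h2]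
  have e1 : ∫ n in Set.Icc (-ϑ) ϑ, (-n - ϑ) = -2 * ϑ ^ 2 := by
    rw [intIcc hϑ]
    have : IntervalIntegrable (fun n : ℝ => -n) volume (-ϑ) ϑ :=
      (continuous_neg.intervalIntegrable _ _)
    rw [intervalIntegral.integral_sub this (intervalIntegrable_const),
      intervalIntegral.integral_neg, integral_id, intervalIntegral.integral_const]
    simp [smul_eq_mul]
    ring
  have e2 : ∫ n in Set.Icc (-ϑ) ϑ, (β + ϑ) * Real.log ((ϑ - n) / (2 * ϑ))
      = (β + ϑ) * -(2 * ϑ) := by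
    rw [integral_Icc_eq_integral_Ioc, integral_const_mul, logVal hϑ]
  rw [e1, e2]
  ring

lemma gg_comp_integrable (hϑ : 0 < ϑ)
    (hN : HasDens N (fun n => if n ∈ Set.Icc (-ϑ) ϑ then (2 * ϑ)⁻¹ else 0)) :
    Integrable (fun ω => gg ϑ β (N ω)) (ℙ : Measure Ω) := by
  rw [hN.integrable_comp (gg_meas ϑ β), uIndicator]
  rw [integrable_indicator_iff measurableSet_Icc]
  exact (gg_intOn hϑ).mul_const _

lemma gg_comp_integral (hϑ : 0 < ϑ)
    (hN : HasDens N (fun n => if n ∈ Set.Icc (-ϑ) ϑ then (2 * ϑ)⁻¹ else 0)) :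
    ∫ ω, gg ϑ β (N ω) ∂(ℙ : Measure Ω) = β := by
  rw [hN.integral_comp (gg_meas ϑ β), uIndicator, MeasureTheory.integral_indicator measurableSet_Icc,
    integral_mul_const, gg_setIntegral hϑ]
  field_simp

end Noise

section QDens
variable {ϑ m : ℝ}

lemma ite_indicator (a : ℝ) (f : ℝ → ℝ) :
    (fun y => if a ≤ y then f y else 0) = (Set.Ici a).indicator f := by
  ext y; by_cases h : a ≤ y <;> simp [Set.indicator, Set.mem_Ici, h]

lemma q_meas (ϑ m : ℝ) :
    Measurable (fun y => if -ϑ ≤ y then m⁻¹ * Real.exp (-((y + ϑ) / m)) else 0) := by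
  refine Measurable.ite measurableSet_Ici ?_ measurable_const
  exact (measurable_const.mul ((Real.measurable_exp.comp
    (((measurable_id.add_const ϑ).div_const m).neg))))

lemma q_nonneg (ϑ : ℝ) (hm : 0 < m) (y : ℝ) :
    0 ≤ if -ϑ ≤ y then m⁻¹ * Real.exp (-((y + ϑ) / m)) else 0 := by
  split_ifs with h
  · positivity
  · exact le_rfl

lemma q_integrable (hm : 0 < m) :
    Integrable (fun y => if -ϑ ≤ y then m⁻¹ * Real.exp (-((y + ϑ) / m)) else 0) := by
  rw [ite_indicator, integrable_indicator_iff measurableSet_Ici]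
  exact (integrableOn_Ici_iff_integrableOn_Ioi).mpr (E0int hm)

lemma q_mass (hm : 0 < m) :
    ∫ y, (if -ϑ ≤ y then m⁻¹ * Real.exp (-((y + ϑ) / m)) else 0) = 1 := by
  rw [ite_indicator, MeasureTheory.integral_indicator measurableSet_Ici,
    MeasureTheory.integral_Ici_eq_integral_Ioi, E0val hm]

lemma q_mean_int (hm : 0 < m) :
    Integrable (fun y => y * (if -ϑ ≤ y then m⁻¹ * Real.exp (-((y + ϑ) / m)) else 0)) := by
  have : (fun y => y * (if -ϑ ≤ y then m⁻¹ * Real.exp (-((y + ϑ) / m)) else 0)) =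
      fun y => if -ϑ ≤ y then y * (m⁻¹ * Real.exp (-((y + ϑ) / m))) else 0 := by
    ext y; split_ifs <;> simp
  rw [this, ite_indicator, integrable_indicator_iff measurableSet_Ici]
  refine (integrableOn_Ici_iff_integrableOn_Ioi).mpr ?_
  have h := (E1int (ϑ := ϑ) hm).sub ((E0int (ϑ := ϑ) hm).const_mul ϑ)
  refine h.congr (Filter.Eventually.of_forall fun y => ?_)
  simp only [Pi.sub_apply]
  ring

lemma qlog_indicator (hm : 0 < m) :
    (fun y => (if -ϑ ≤ y then m⁻¹ * Real.exp (-((y + ϑ) / m)) else 0) *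
        Real.log (if -ϑ ≤ y then m⁻¹ * Real.exp (-((y + ϑ) / m)) else 0)) =
      (Set.Ici (-ϑ)).indicator (fun y =>
        (-Real.log m) * (m⁻¹ * Real.exp (-((y + ϑ) / m)))
          - m⁻¹ * ((y + ϑ) * (m⁻¹ * Real.exp (-((y + ϑ) / m))))) := by
  ext y
  by_cases h : -ϑ ≤ y
  · rw [if_pos h, Set.indicator_of_mem (Set.mem_Ici.mpr h)]
    rw [Real.log_mul (by positivity) (Real.exp_ne_zero _), Real.log_inv, Real.log_exp]
    field_simp
    ring
  · rw [if_neg h, Set.indicator_of_notMem (by simpa using h)]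
    simp

lemma qlog_integrable (hm : 0 < m) :
    Integrable (fun y => (if -ϑ ≤ y then m⁻¹ * Real.exp (-((y + ϑ) / m)) else 0) *
      Real.log (if -ϑ ≤ y then m⁻¹ * Real.exp (-((y + ϑ) / m)) else 0)) := by
  rw [qlog_indicator hm, integrable_indicator_iff measurableSet_Ici]
  refine (integrableOn_Ici_iff_integrableOn_Ioi).mpr ?_
  exact ((E0int hm).const_mul _).sub ((E1int hm).const_mul _)

lemma qlog_integral (hm : 0 < m) :
    ∫ y, (if -ϑ ≤ y then m⁻¹ * Real.exp (-((y + ϑ) / m)) else 0) *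
      Real.log (if -ϑ ≤ y then m⁻¹ * Real.exp (-((y + ϑ) / m)) else 0)
      = -Real.log m - 1 := by
  rw [qlog_indicator hm, MeasureTheory.integral_indicator measurableSet_Ici,
    MeasureTheory.integral_Ici_eq_integral_Ioi]
  have hE0 : ∫ y in Set.Ioi (-ϑ), (-Real.log m) * (m⁻¹ * Real.exp (-((y + ϑ) / m)))
      = -Real.log m := by rw [MeasureTheory.integral_const_mul, E0val hm, mul_one]
  have hE1 : ∫ y in Set.Ioi (-ϑ), m⁻¹ * ((y + ϑ) * (m⁻¹ * Real.exp (-((y + ϑ) / m))))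
      = m⁻¹ * m := by rw [MeasureTheory.integral_const_mul, E1val hm]
  rw [integral_sub (((E0int hm).const_mul _)) (((E1int hm).const_mul _)), hE0, hE1]
  field_simp

lemma gibbs {p : ℝ → ℝ} (hm : 0 < m)
    (hp0 : ∀ y, 0 ≤ p y)
    (hsupp : ∀ᵐ y ∂(volume : Measure ℝ), y < -ϑ → p y = 0)
    (hmass : ∫ y, p y = 1) (hpint : Integrable p)
    (hmeanint : Integrable (fun y => y * p y))
    (hmean : ∫ y, y * p y ≤ m - ϑ)
    (hent : Integrable (fun y => p y * Real.log (p y))) :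
    -∫ y, p y * Real.log (p y) ≤ Real.log m + 1 := by
  set q : ℝ → ℝ := fun y => if -ϑ ≤ y then m⁻¹ * Real.exp (-((y + ϑ) / m)) else 0 with hqdef
  have key : ∀ᵐ y ∂(volume : Measure ℝ),
      p y - q y - p y * (Real.log m + (y + ϑ) / m) ≤ p y * Real.log (p y) := by
    filter_upwards [hsupp] with y hy
    by_cases hcase : -ϑ ≤ y
    · have hq : q y = m⁻¹ * Real.exp (-((y + ϑ) / m)) := if_pos hcase
      have hqpos : 0 < q y := by rw [hq]; positivity
      have hlogq : Real.log (q y) = -(Real.log m + (y + ϑ) / m) := by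
        rw [hq, Real.log_mul (by positivity) (Real.exp_ne_zero _), Real.log_inv, Real.log_exp]
        ring
      by_cases hp : p y = 0
      · rw [hp]; simp [hqpos.le]
      · have hppos : 0 < p y := lt_of_le_of_ne (hp0 y) (Ne.symm hp)
        have h5 : Real.log (q y / p y) ≤ q y / p y - 1 :=
          Real.log_le_sub_one_of_pos (by positivity)
        rw [Real.log_div (ne_of_gt hqpos) hp] at h5
        have h6 := mul_le_mul_of_nonneg_left h5 hppos.le
        have h7 : p y * (q y / p y - 1) = q y - p y := by field_simp
        rw [h7, hlogq] at h6
        nlinarith [h6]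
    · have hp0y : p y = 0 := hy (lt_of_not_ge hcase)
      have hq0 : q y = 0 := if_neg hcase
      rw [hp0y, hq0]; simp
  have hL : (fun y => p y * (Real.log m + (y + ϑ) / m)) =
      fun y => (Real.log m + ϑ / m) * p y + m⁻¹ * (y * p y) := by
    ext y; field_simp; ring
  have hLint : Integrable (fun y => p y * (Real.log m + (y + ϑ) / m)) := by
    rw [hL]; exact (hpint.const_mul _).add (hmeanint.const_mul _)
  have hqint : Integrable q := q_integrable hm
  have hpq : Integrable (fun y => p y - q y) := hpint.sub hqint
  have hint1 : Integrable (fun y => p y - q y - p y * (Real.log m + (y + ϑ) / m)) :=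
    hpq.sub hLint
  have h9 := integral_mono_ae hint1 hent key
  rw [integral_sub hpq hLint, integral_sub hpint hqint, hmass] at h9
  have hqmass : ∫ y, q y = 1 := q_mass hm
  rw [hqmass] at h9
  have hA : ∫ y, p y * (Real.log m + (y + ϑ) / m)
      = (Real.log m + ϑ / m) + m⁻¹ * ∫ y, y * p y := by
    rw [hL, integral_add (hpint.const_mul _) (hmeanint.const_mul _),
      MeasureTheory.integral_const_mul, MeasureTheory.integral_const_mul, hmass, mul_one]
  have hAle : ∫ y, p y * (Real.log m + (y + ϑ) / m) ≤ Real.log m + 1 := by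
    rw [hA]
    have h10 : m⁻¹ * ∫ y, y * p y ≤ m⁻¹ * (m - ϑ) :=
      mul_le_mul_of_nonneg_left hmean (by positivity)
    have h11 : m⁻¹ * (m - ϑ) = 1 - ϑ / m := by field_simp
    rw [h11] at h10
    have h12 : ϑ / m + (1 - ϑ / m) = 1 := by ring
    linarith
  linarith

end QDens

section Push
variable {Ω : Type*} [MeasureSpace Ω] [IsProbabilityMeasure (ℙ : Measure Ω)]
variable {N : Ω → ℝ} {ϑ m : ℝ}

/-- The optimal output as a function of the noise. -/
def TT (ϑ m : ℝ) (n : ℝ) : ℝ := -ϑ - m * Real.log ((ϑ - n) / (2 * ϑ))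

lemma TT_meas (ϑ m : ℝ) : Measurable (TT ϑ m) := by
  unfold TT
  exact (measurable_const.sub (measurable_const.mul
    (Real.measurable_log.comp ((measurable_const.sub measurable_id).div_const _))))

lemma TT_iff (hϑ : 0 < ϑ) (hm : 0 < m) {t n : ℝ} (hn : n ∈ Set.Ico (-ϑ) ϑ) :
    TT ϑ m n ≤ t ↔ n ≤ ϑ - 2 * ϑ * Real.exp (-((t + ϑ) / m)) := by
  have hupos : 0 < (ϑ - n) / (2 * ϑ) := div_pos (by linarith [hn.2]) (by positivity)
  have h1 : TT ϑ m n ≤ t ↔ -(t + ϑ) ≤ Real.log ((ϑ - n) / (2 * ϑ)) * m := by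
    unfold TT
    constructor <;> intro h <;> nlinarith [h]
  have h2 : (-(t + ϑ) ≤ Real.log ((ϑ - n) / (2 * ϑ)) * m) ↔
      (-(t + ϑ)) / m ≤ Real.log ((ϑ - n) / (2 * ϑ)) := (div_le_iff₀ hm).symm
  have h3 : ((-(t + ϑ)) / m ≤ Real.log ((ϑ - n) / (2 * ϑ))) ↔
      Real.exp ((-(t + ϑ)) / m) ≤ (ϑ - n) / (2 * ϑ) := Real.le_log_iff_exp_le hupos
  have h4 : (Real.exp ((-(t + ϑ)) / m) ≤ (ϑ - n) / (2 * ϑ)) ↔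
      Real.exp ((-(t + ϑ)) / m) * (2 * ϑ) ≤ ϑ - n := le_div_iff₀ (by positivity)
  have h6 : (-(t + ϑ)) / m = -((t + ϑ) / m) := by ring
  rw [h1, h2, h3, h4, h6]
  constructor <;> intro h <;> nlinarith [h]

lemma uLawMass (hϑ : 0 < ϑ) :
    (volume.withDensity
      (fun n => ENNReal.ofReal (if n ∈ Set.Icc (-ϑ) ϑ then (2 * ϑ)⁻¹ else 0))) Set.univ = 1 := by
  have hpind : (fun n => ENNReal.ofReal (if n ∈ Set.Icc (-ϑ) ϑ then (2 * ϑ)⁻¹ else 0)) =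
      (Set.Icc (-ϑ) ϑ).indicator (fun _ => ENNReal.ofReal (2 * ϑ)⁻¹) := by
    ext n; by_cases h : n ∈ Set.Icc (-ϑ) ϑ <;> simp [h]
  rw [withDensity_apply _ MeasurableSet.univ, Measure.restrict_univ, hpind,
    lintegral_indicator measurableSet_Icc, setLIntegral_const, Real.volume_Icc]
  rw [← ENNReal.ofReal_mul (by positivity)]
  rw [show (2 * ϑ)⁻¹ * (ϑ - -ϑ) = 1 by field_simp; ring]
  exact ENNReal.ofReal_one

lemma Y_map_eq (hϑ : 0 < ϑ) (hm : 0 < m)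
    (hN : HasDens N (fun n => if n ∈ Set.Icc (-ϑ) ϑ then (2 * ϑ)⁻¹ else 0)) :
    Measure.map (fun ω => TT ϑ m (N ω)) (ℙ : Measure Ω) =
      volume.withDensity
        (fun y => ENNReal.ofReal (if -ϑ ≤ y then m⁻¹ * Real.exp (-((y + ϑ) / m)) else 0)) := by
  obtain ⟨hNm, hpNm, hpN0, hlaw⟩ := hN
  have hT := TT_meas ϑ m
  rw [show (fun ω => TT ϑ m (N ω)) = TT ϑ m ∘ N from rfl, ← Measure.map_map hT hNm, hlaw]
  haveI hP1 : IsProbabilityMeasure (volume.withDensity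
      (fun n => ENNReal.ofReal (if n ∈ Set.Icc (-ϑ) ϑ then (2 * ϑ)⁻¹ else 0))) :=
    ⟨uLawMass hϑ⟩
  haveI hP2 : IsProbabilityMeasure (volume.withDensity
      (fun y => ENNReal.ofReal (if -ϑ ≤ y then m⁻¹ * Real.exp (-((y + ϑ) / m)) else 0))) := by
    constructor
    rw [withDensity_apply _ MeasurableSet.univ, Measure.restrict_univ,
      ← ofReal_integral_eq_lintegral_ofReal (q_integrable hm)
        (Filter.Eventually.of_forall (q_nonneg ϑ hm)), q_mass hm]
    exact ENNReal.ofReal_one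
  haveI : IsProbabilityMeasure (Measure.map (TT ϑ m) (volume.withDensity
      (fun n => ENNReal.ofReal (if n ∈ Set.Icc (-ϑ) ϑ then (2 * ϑ)⁻¹ else 0)))) :=
    Measure.isProbabilityMeasure_map hT.aemeasurable
  refine Measure.ext_of_Iic _ _ (fun t => ?_)
  set s : Set ℝ := TT ϑ m ⁻¹' Set.Iic t with hs
  have hsm : MeasurableSet s := hT measurableSet_Iic
  set r : ℝ := ϑ - 2 * ϑ * Real.exp (-((t + ϑ) / m)) with hr
  -- LHS
  have hpind : (fun n => ENNReal.ofReal (if n ∈ Set.Icc (-ϑ) ϑ then (2 * ϑ)⁻¹ else 0)) =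
      (Set.Icc (-ϑ) ϑ).indicator (fun _ => ENNReal.ofReal (2 * ϑ)⁻¹) := by
    ext n; by_cases h : n ∈ Set.Icc (-ϑ) ϑ <;> simp [h]
  have hLHS : Measure.map (TT ϑ m) (volume.withDensity
      (fun n => ENNReal.ofReal (if n ∈ Set.Icc (-ϑ) ϑ then (2 * ϑ)⁻¹ else 0))) (Set.Iic t)
      = ENNReal.ofReal (2 * ϑ)⁻¹ * volume (Set.Icc (-ϑ) ϑ ∩ s) := by
    rw [Measure.map_apply hT measurableSet_Iic, withDensity_apply _ hsm, hpind,
      lintegral_indicator measurableSet_Icc, setLIntegral_const,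
      Measure.restrict_apply measurableSet_Icc, Set.inter_comm]
  have hIcoInter : Set.Ico (-ϑ) ϑ ∩ s = Set.Icc (-ϑ) r := by
    have hrlt : r < ϑ := by
      rw [hr]
      have : 0 < 2 * ϑ * Real.exp (-((t + ϑ) / m)) := by positivity
      linarith
    ext n
    constructor
    · rintro ⟨hn, hns⟩
      exact ⟨hn.1, (TT_iff hϑ hm hn).mp hns⟩
    · rintro ⟨h1, h2⟩
      have hn : n ∈ Set.Ico (-ϑ) ϑ := ⟨h1, lt_of_le_of_lt h2 hrlt⟩
      exact ⟨hn, (TT_iff hϑ hm hn).mpr h2⟩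
  have hvol : volume (Set.Icc (-ϑ) ϑ ∩ s) = ENNReal.ofReal (r + ϑ) := by
    have hsplit : Set.Icc (-ϑ) ϑ ∩ s = (Set.Ico (-ϑ) ϑ ∩ s) ∪ ({ϑ} ∩ s) := by
      rw [← Set.Ico_union_right (by linarith : -ϑ ≤ ϑ), Set.union_inter_distrib_right]
    have hnull : volume ({ϑ} ∩ s : Set ℝ) = 0 :=
      measure_mono_null Set.inter_subset_left Real.volume_singleton
    have hle : volume (Set.Icc (-ϑ) ϑ ∩ s) ≤ volume (Set.Ico (-ϑ) ϑ ∩ s) := by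
      rw [hsplit]
      refine (measure_union_le _ _).trans ?_
      rw [hnull, add_zero]
    have hge : volume (Set.Ico (-ϑ) ϑ ∩ s) ≤ volume (Set.Icc (-ϑ) ϑ ∩ s) :=
      measure_mono (Set.inter_subset_inter_left s Set.Ico_subset_Icc_self)
    rw [le_antisymm hle hge, hIcoInter, Real.volume_Icc]
    congr 1
    ring
  rw [hLHS, hvol, ← ENNReal.ofReal_mul (by positivity)]
  -- RHS
  have hqind : (fun y => ENNReal.ofReal (if -ϑ ≤ y then m⁻¹ * Real.exp (-((y + ϑ) / m)) else 0)) =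
      (Set.Ici (-ϑ)).indicator (fun y => ENNReal.ofReal (m⁻¹ * Real.exp (-((y + ϑ) / m)))) := by
    ext y; by_cases h : -ϑ ≤ y <;> simp [Set.indicator, Set.mem_Ici, h]
  rw [withDensity_apply _ measurableSet_Iic, hqind,
    lintegral_indicator measurableSet_Ici, Measure.restrict_restrict measurableSet_Ici,
    Set.Ici_inter_Iic]
  by_cases hct : -ϑ ≤ t
  · have hcont : Continuous (fun y : ℝ => m⁻¹ * Real.exp (-((y + ϑ) / m))) := by continuity
    have hint : IntegrableOn (fun y : ℝ => m⁻¹ * Real.exp (-((y + ϑ) / m)))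
        (Set.Icc (-ϑ) t) := hcont.integrableOn_Icc
    rw [← ofReal_integral_eq_lintegral_ofReal hint
      (Filter.Eventually.of_forall fun y => by positivity)]
    congr 1
    have hFTC : ∫ y in (-ϑ)..t, m⁻¹ * Real.exp (-((y + ϑ) / m))
        = (fun y => -Real.exp (-((y + ϑ) / m))) t - (fun y => -Real.exp (-((y + ϑ) / m))) (-ϑ) :=
      intervalIntegral.integral_eq_sub_of_hasDerivAt (fun y _ => expDeriv hm y)
        ((hcont.intervalIntegrable _ _))
    rw [MeasureTheory.integral_Icc_eq_integral_Ioc, ← intervalIntegral.integral_of_le hct, hFTC]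
    simp only []
    rw [hr]
    have : -((-ϑ + ϑ) / m) = 0 := by ring_nf
    rw [this, Real.exp_zero]
    field_simp
    ring
  · have hcc : Set.Icc (-ϑ) t = ∅ := Set.Icc_eq_empty (by linarith [lt_of_not_ge hct])
    rw [hcc]
    simp only [Measure.restrict_empty, lintegral_zero_measure]
    rw [ENNReal.ofReal_eq_zero]
    have hexp : 1 < Real.exp (-((t + ϑ) / m)) := by
      rw [show (1:ℝ) = Real.exp 0 from (Real.exp_zero).symm]
      apply Real.exp_lt_exp.mpr
      have h1 : t + ϑ < 0 := by linarith [lt_of_not_ge hct]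
      have h2 : (t + ϑ) / m < 0 := div_neg_of_neg_of_pos h1 hm
      linarith
    have hneg : r + ϑ < 0 := by
      rw [hr]
      nlinarith [hexp, hϑ]
    have hpos : (0:ℝ) < (2 * ϑ)⁻¹ := by positivity
    have hmul := mul_pos hpos (neg_pos.mpr hneg)
    nlinarith [hmul]

end Push

section Part1
variable {Ω : Type*} [MeasureSpace Ω] [IsProbabilityMeasure (ℙ : Measure Ω)]

lemma part1 (N : Ω → ℝ) (ϑ : ℝ) (hϑ : 0 < ϑ)
    (hN : HasDens N (fun n => if n ∈ Set.Icc (-ϑ) ϑ then (2 * ϑ)⁻¹ else 0))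
    (β : ℝ) (hβ : ϑ ≤ β)
    (X : Ω → ℝ) (pY : ℝ → ℝ) (hXm : Measurable X) (hXint : Integrable X (ℙ : Measure Ω))
    (hX0 : ∀ᵐ ω ∂(ℙ : Measure Ω), 0 ≤ X ω) (hXmean : (∫ ω, X ω ∂(ℙ : Measure Ω)) ≤ β)
    (hdens : HasDens (fun ω => X ω + N ω) pY) (hwell : EntWellDef pY) :
    dEnt pY ≤ Real.log (Real.exp 1 * (β + ϑ)) := by
  have hm : 0 < β + ϑ := by linarith
  have hNmem := N_mem hN
  have hNm : Measurable N := hN.1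
  have hNint : Integrable N (ℙ : Measure Ω) := N_integrable hNm hNmem
  obtain ⟨hYm, hpm, hp0, hlaw⟩ := hdens
  have hdens' : HasDens (fun ω => X ω + N ω) pY := ⟨hYm, hpm, hp0, hlaw⟩
  have hYint : Integrable (fun ω => X ω + N ω) (ℙ : Measure Ω) := hXint.add hNint
  -- total mass one
  have hmassL : ∫⁻ y, ENNReal.ofReal (pY y) = 1 := by
    have h1 : Measure.map (fun ω => X ω + N ω) (ℙ : Measure Ω) Set.univ = 1 := by
      rw [Measure.map_apply hYm MeasurableSet.univ]; simp
    rw [hlaw, withDensity_apply _ MeasurableSet.univ, Measure.restrict_univ] at h1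
    exact h1
  have hpint : Integrable pY := by
    refine ⟨hpm.aestronglyMeasurable, ?_⟩
    rw [hasFiniteIntegral_iff_ofReal (Filter.Eventually.of_forall hp0), hmassL]
    exact ENNReal.one_lt_top
  have hmass : ∫ y, pY y = 1 := by
    rw [integral_eq_lintegral_of_nonneg_ae (Filter.Eventually.of_forall hp0)
      hpm.aestronglyMeasurable, hmassL]
    simp
  -- support
  have hsupp : ∀ᵐ y ∂(volume : Measure ℝ), y < -ϑ → pY y = 0 := by
    have hae : ∀ᵐ ω ∂(ℙ : Measure Ω), ¬ (X ω + N ω < -ϑ) := by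
      filter_upwards [hX0, hNmem] with ω h1 h2
      push_neg
      linarith [h2.1]
    have h0 : (ℙ : Measure Ω) ((fun ω => X ω + N ω) ⁻¹' Set.Iio (-ϑ)) = 0 := by
      have := ae_iff.mp hae
      simp only [not_not] at this
      convert this using 2
      rfl
    rw [hdens'.apply measurableSet_Iio] at h0
    have h2 := (setLIntegral_eq_zero_iff measurableSet_Iio hpm.ennreal_ofReal).mp h0
    filter_upwards [h2] with y hy hlt
    have h4 := hy (Set.mem_Iio.mpr hlt)
    have h5 := ENNReal.ofReal_eq_zero.mp h4
    linarith [hp0 y]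
  -- mean
  have hid : Measurable (fun y : ℝ => y) := measurable_id
  have hmeanint : Integrable (fun y => y * pY y) := by
    have := (hdens'.integrable_comp hid).mp
    exact this hYint
  have hmeanval : ∫ y, y * pY y ≤ (β + ϑ) - ϑ := by
    have htrans := hdens'.integral_comp hid
    have hsum : ∫ ω, (X ω + N ω) ∂(ℙ : Measure Ω)
        = (∫ ω, X ω ∂(ℙ : Measure Ω)) + ∫ ω, N ω ∂(ℙ : Measure Ω) :=
      integral_add hXint hNint
    rw [N_integral_zero hϑ hN, add_zero] at hsum
    have : ∫ y, y * pY y = ∫ ω, X ω ∂(ℙ : Measure Ω) := by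
      rw [← htrans, hsum]
    rw [this]
    linarith
  have hg := gibbs (ϑ := ϑ) hm hp0 hsupp hmass hpint hmeanint hmeanval hwell
  unfold dEnt
  rw [Real.log_mul (Real.exp_ne_zero 1) (ne_of_gt hm), Real.log_exp]
  linarith

end Part1

/-- uniform noise on `[−ϑ,ϑ]`, linear cost, amplitude constraint
`X ≥ 0`, case `β ≥ ϑ`: every nonnegative input with `E X ≤ β` satisfies
`h(X+N) ≤ ln(e(β+ϑ))`, with equality for the dependent input `X† = g(N)` with
`g(n) = −n − ϑ − (β+ϑ)·ln((ϑ−n)/(2ϑ))`; for this input `X† ≥ 0` a.s., `E X† = β`, and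
`Y† = X†+N` has the shifted exponential density
`p_{Y†}(y) = (β+ϑ)⁻¹ e^{−(y+ϑ)/(β+ϑ)}` for `y ≥ −ϑ`, with `h(Y†) = ln(e(β+ϑ))`;
in particular `sup{h(Y) : Y ∈ Σ(N;x,β,[0,∞))} = ln(e(β+ϑ))`. -/
theorem uniform_noise_linear_cost
    {Ω : Type*} [MeasureSpace Ω] [IsProbabilityMeasure (ℙ : Measure Ω)]
    (N : Ω → ℝ) (ϑ : ℝ) (hϑ : 0 < ϑ)
    (hN : HasDens N (fun n => if n ∈ Set.Icc (-ϑ) ϑ then (2 * ϑ)⁻¹ else 0))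
    (β : ℝ) (hβ : ϑ ≤ β) :
    (∀ (X : Ω → ℝ) (pY : ℝ → ℝ), Measurable X → Integrable X (ℙ : Measure Ω) →
      (∀ᵐ ω ∂(ℙ : Measure Ω), 0 ≤ X ω) → (∫ ω, X ω ∂(ℙ : Measure Ω)) ≤ β →
      HasDens (fun ω => X ω + N ω) pY → EntWellDef pY →
      dEnt pY ≤ Real.log (Real.exp 1 * (β + ϑ))) ∧
    (∀ᵐ ω ∂(ℙ : Measure Ω),
      0 ≤ -N ω - ϑ - (β + ϑ) * Real.log ((ϑ - N ω) / (2 * ϑ))) ∧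
    (∫ ω, (-N ω - ϑ - (β + ϑ) * Real.log ((ϑ - N ω) / (2 * ϑ))) ∂(ℙ : Measure Ω)) = β ∧
    HasDens (fun ω =>
        (-N ω - ϑ - (β + ϑ) * Real.log ((ϑ - N ω) / (2 * ϑ))) + N ω)
      (fun y => if -ϑ ≤ y then (β + ϑ)⁻¹ * Real.exp (-((y + ϑ) / (β + ϑ))) else 0) ∧
    dEnt (fun y => if -ϑ ≤ y then (β + ϑ)⁻¹ * Real.exp (-((y + ϑ) / (β + ϑ))) else 0) =
      Real.log (Real.exp 1 * (β + ϑ)) ∧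
    sSup (SigmaEntAmp N (fun x => x) β (Set.Ici 0)) = Real.log (Real.exp 1 * (β + ϑ)) := by
  have hm : 0 < β + ϑ := by linarith
  have hNm := hN.1
  have P2 : ∀ᵐ ω ∂(ℙ : Measure Ω),
      0 ≤ -N ω - ϑ - (β + ϑ) * Real.log ((ϑ - N ω) / (2 * ϑ)) := by
    filter_upwards [N_mem hN] with ω h
    exact gg_nonneg hϑ hβ h
  have P3 : (∫ ω, (-N ω - ϑ - (β + ϑ) * Real.log ((ϑ - N ω) / (2 * ϑ))) ∂(ℙ : Measure Ω)) = β :=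
    gg_comp_integral hϑ hN
  have hfun : (fun ω => (-N ω - ϑ - (β + ϑ) * Real.log ((ϑ - N ω) / (2 * ϑ))) + N ω)
      = fun ω => TT ϑ (β + ϑ) (N ω) := by
    funext ω; unfold TT; ring
  have P4 : HasDens (fun ω => (-N ω - ϑ - (β + ϑ) * Real.log ((ϑ - N ω) / (2 * ϑ))) + N ω)
      (fun y => if -ϑ ≤ y then (β + ϑ)⁻¹ * Real.exp (-((y + ϑ) / (β + ϑ))) else 0) := by
    refine ⟨?_, q_meas ϑ (β + ϑ), q_nonneg ϑ hm, ?_⟩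
    · rw [hfun]; exact (TT_meas ϑ (β + ϑ)).comp hNm
    · rw [hfun]; exact Y_map_eq hϑ hm hN
  have P5 : dEnt (fun y => if -ϑ ≤ y then (β + ϑ)⁻¹ * Real.exp (-((y + ϑ) / (β + ϑ))) else 0)
      = Real.log (Real.exp 1 * (β + ϑ)) := by
    unfold dEnt
    rw [qlog_integral hm, Real.log_mul (Real.exp_ne_zero 1) (ne_of_gt hm), Real.log_exp]
    ring
  refine ⟨fun X pY hXm hXint hX0 hXmean hdens hwell =>
      part1 N ϑ hϑ hN β hβ X pY hXm hXint hX0 hXmean hdens hwell, P2, P3, P4, P5, ?_⟩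
  apply IsGreatest.csSup_eq
  constructor
  · refine ⟨fun ω => gg ϑ β (N ω),
      (fun y => if -ϑ ≤ y then (β + ϑ)⁻¹ * Real.exp (-((y + ϑ) / (β + ϑ))) else 0),
      ?_, ?_, ?_, ?_, ?_⟩
    · exact ⟨(gg_meas ϑ β).comp hNm, gg_comp_integrable hϑ hN, gg_comp_integrable hϑ hN,
        le_of_eq (gg_comp_integral hϑ hN)⟩
    · filter_upwards [N_mem hN] with ω h
      exact Set.mem_Ici.mpr (gg_nonneg hϑ hβ h)
    · exact P4
    · exact qlog_integrable hm
    · exact P5.symm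
  · rintro h ⟨X, pY, ⟨hXm, hXint, hGint, hcost⟩, hmem, hdens, hwell, rfl⟩
    refine part1 N ϑ hϑ hN β hβ X pY hXm hXint ?_ ?_ hdens hwell
    · filter_upwards [hmem] with ω hw
      exact hw
    · exact hcost
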